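/- arXiv:0902.3073 — 2 statements merged into one kernel-verified Lean document; each statement's English description precedes it below -/
import Mathlib

section
/- Suppose b > a > 0 and δ > 0. Then for all integers m ≥ 0 and 0 ≤ k ≤ m/2, the quantity M_k := Γ(a+δ+k)Γ(b+m−k) + [if k < m−k] Γ(a+δ+m−k)Γ(b+k) − Γ(a+k)Γ(b+δ+m−k) − [if k < m−k] Γ(a+m−k)Γ(b+δ+k) is strictly negative (for k = m−k, M_k = Γ(a+δ+k)Γ(b+m−k) − Γ(a+k)Γ(b+δ+m−k) < 0). -/
open Real Set

private lemma sc_congr {s : Set ℝ} {f g : ℝ → ℝ} (hf : StrictConvexOn ℝ s f)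
    (h : ∀ x ∈ s, f x = g x) : StrictConvexOn ℝ s g := by
  refine ⟨hf.1, fun x hx y hy hxy a b ha hb hab => ?_⟩
  have hm : a • x + b • y ∈ s := hf.1 hx hy ha.le hb.le hab
  rw [← h x hx, ← h y hy, ← h _ hm]
  exact hf.2 hx hy hxy ha hb hab

private lemma sc_comp_affine {f : ℝ → ℝ} {s t : Set ℝ} (hf : StrictConvexOn ℝ s f)
    (c d : ℝ) (hc : c ≠ 0) (ht : Convex ℝ t) (hmap : ∀ x ∈ t, c * x + d ∈ s) :
    StrictConvexOn ℝ t (fun x => f (c * x + d)) := by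
  refine ⟨ht, fun x hx y hy hxy a b ha hb hab => ?_⟩
  have hne : c * x + d ≠ c * y + d := by
    intro h
    exact hxy (mul_left_cancel₀ hc (by linarith))
  have key := hf.2 (hmap x hx) (hmap y hy) hne ha hb hab
  have harg : a * (c * x + d) + b * (c * y + d) = c * (a * x + b * y) + d := by
    linear_combination d * hab
  simpa [smul_eq_mul, harg] using key

private lemma sc_exp_comp {s : Set ℝ} {f : ℝ → ℝ} (hf : StrictConvexOn ℝ s f) :
    StrictConvexOn ℝ s (fun x => Real.exp (f x)) := by
  refine ⟨hf.1, fun x hx y hy hxy a b ha hb hab => ?_⟩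
  calc Real.exp (f (a • x + b • y)) < Real.exp (a • f x + b • f y) :=
        Real.exp_lt_exp.2 (hf.2 hx hy hxy ha hb hab)
    _ ≤ a • Real.exp (f x) + b • Real.exp (f y) :=
        convexOn_exp.2 (mem_univ _) (mem_univ _) ha.le hb.le hab

private lemma strictConvexOn_log_Gamma :
    StrictConvexOn ℝ (Ioi (0:ℝ)) (fun x => Real.log (Real.Gamma x)) := by
  have h1 : ConvexOn ℝ (Ioi (0:ℝ)) (fun x => Real.log (Real.Gamma (x + 1))) := by
    refine ⟨convex_Ioi 0, fun x hx y hy a b ha hb hab => ?_⟩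
    have hx1 : x + 1 ∈ Ioi (0:ℝ) := by simp only [mem_Ioi] at hx ⊢; linarith
    have hy1 : y + 1 ∈ Ioi (0:ℝ) := by simp only [mem_Ioi] at hy ⊢; linarith
    have key := Real.convexOn_log_Gamma.2 hx1 hy1 ha hb hab
    have harg : a * (x + 1) + b * (y + 1) = a * x + b * y + 1 := by
      linear_combination hab
    simpa [Function.comp, smul_eq_mul, harg] using key
  have h2 : StrictConvexOn ℝ (Ioi (0:ℝ)) (fun x => -Real.log x) :=
    strictConcaveOn_log_Ioi.neg
  have h3 := h2.add_convexOn h1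
  refine sc_congr h3 (fun x hx => ?_)
  have hx0 : (0:ℝ) < x := hx
  have hΓ : Real.Gamma (x + 1) = x * Real.Gamma x := Real.Gamma_add_one hx0.ne'
  have hΓx : 0 < Real.Gamma x := Real.Gamma_pos_of_pos hx0
  simp only [Pi.add_apply]
  rw [hΓ, Real.log_mul hx0.ne' hΓx.ne']
  ring

private lemma core (δ v x y : ℝ) (hδ : 0 < δ) (hv : 0 ≤ v) (hx : 0 < x) (hxy : x < y) :
    Real.Gamma (x + δ) * Real.Gamma (y + v) + Real.Gamma (x + v + δ) * Real.Gamma y <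
      Real.Gamma x * Real.Gamma (y + v + δ) + Real.Gamma (x + v) * Real.Gamma (y + δ) := by
  set s : ℝ := x + y + v with hs
  set F : ℝ → ℝ := fun t => Real.Gamma (t + δ) * Real.Gamma (s - t) with hF
  set H : ℝ → ℝ := fun t => F t + F (t + v) with hHdef
  have hy : 0 < y := hx.trans hxy
  -- F strictly convex on Ioo (-δ) s
  have hA : StrictConvexOn ℝ (Ioo (-δ) s) (fun t => Real.log (Real.Gamma (t + δ))) := by
    have := sc_comp_affine strictConvexOn_log_Gamma 1 δ one_ne_zero (convex_Ioo (-δ) s)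
      (fun t ht => by simp only [mem_Ioo] at ht; simp only [mem_Ioi]; linarith [ht.1])
    exact sc_congr this (fun t _ => by ring_nf)
  have hB : StrictConvexOn ℝ (Ioo (-δ) s) (fun t => Real.log (Real.Gamma (s - t))) := by
    have := sc_comp_affine strictConvexOn_log_Gamma (-1) s (by norm_num) (convex_Ioo (-δ) s)
      (fun t ht => by simp only [mem_Ioo] at ht; simp only [mem_Ioi]; linarith [ht.2])
    exact sc_congr this (fun t _ => by ring_nf)
  have hL := hA.add hB
  have hFc : StrictConvexOn ℝ (Ioo (-δ) s) F := by
    refine sc_congr (sc_exp_comp hL) (fun t ht => ?_)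
    simp only [mem_Ioo] at ht
    have h1 : 0 < t + δ := by linarith [ht.1]
    have h2 : 0 < s - t := by linarith [ht.2]
    simp only [Pi.add_apply]
    rw [Real.exp_add, Real.exp_log (Real.Gamma_pos_of_pos h1),
      Real.exp_log (Real.Gamma_pos_of_pos h2)]
  -- H strictly convex on Ioo (-δ) (x+y)
  have hsub : Ioo (-δ) (x + y) ⊆ Ioo (-δ) s := by
    apply Ioo_subset_Ioo le_rfl; simp only [hs]; linarith
  have hF1 : StrictConvexOn ℝ (Ioo (-δ) (x + y)) F := hFc.subset hsub (convex_Ioo _ _)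
  have hF2 : StrictConvexOn ℝ (Ioo (-δ) (x + y)) (fun t => F (t + v)) := by
    have := sc_comp_affine hFc 1 v one_ne_zero (convex_Ioo (-δ) (x + y))
      (fun t ht => by simp only [mem_Ioo] at ht ⊢; constructor <;> [linarith [ht.1]; (simp only [hs]; linarith [ht.2])])
    exact sc_congr this (fun t _ => by ring_nf)
  have hHc : StrictConvexOn ℝ (Ioo (-δ) (x + y)) H := by
    refine sc_congr (hF1.add hF2) (fun t _ => ?_)
    simp [hHdef]
  -- symmetry: H (x - δ) = H y
  have hsym : H (x - δ) = H y := by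
    simp only [hHdef, hF]
    have e1 : x - δ + δ = x := by ring
    have e2 : s - (x - δ) = y + v + δ := by simp only [hs]; ring
    have e3 : x - δ + v + δ = x + v := by ring
    have e4 : s - (x - δ + v) = y + δ := by simp only [hs]; ring
    have e5 : s - y = x + v := by simp only [hs]; ring
    have e6 : s - (y + v) = x := by simp only [hs]; ring
    rw [e1, e2, e3, e4, e5, e6]; ring
  -- convex combination
  set D : ℝ := y - x + δ with hD
  have hD0 : 0 < D := by simp only [hD]; linarith
  have hθ : 0 < (y - x) / D := div_pos (by linarith) hD0
  have hb : 0 < δ / D := div_pos hδ hD0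
  have hab : (y - x) / D + δ / D = 1 := by field_simp; linarith [hD]
  have hm1 : x - δ ∈ Ioo (-δ) (x + y) := by
    simp only [mem_Ioo]; constructor <;> linarith
  have hm2 : y ∈ Ioo (-δ) (x + y) := by
    simp only [mem_Ioo]; constructor <;> linarith
  have hne : x - δ ≠ y := by intro h; linarith
  have key := hHc.2 hm1 hm2 hne hθ hb hab
  have hcomb : ((y - x) / D) • (x - δ) + (δ / D) • y = x := by
    simp only [smul_eq_mul]; field_simp; ring
  rw [hcomb, hsym] at key
  simp only [smul_eq_mul] at key
  have hHxy : H x < H y := by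
    have hone : (y - x) / D * H y + δ / D * H y = H y := by
      linear_combination (H y) * hab
    exact lt_of_lt_of_eq key hone
  -- unfold H
  simp only [hHdef, hF] at hHxy
  have f1 : s - x = y + v := by simp only [hs]; ring
  have f2 : s - (x + v) = y := by simp only [hs]; ring
  have f3 : s - y = x + v := by simp only [hs]; ring
  have f4 : s - (y + v) = x := by simp only [hs]; ring
  rw [f1, f2, f3, f4] at hHxy
  nlinarith [hHxy]

theorem stmt_6 (a b δ : ℝ) (ha : 0 < a) (hab : a < b) (hδ : 0 < δ)
    (m k : ℕ) (hk : 2 * k ≤ m) :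
    (2 * k < m →
      Real.Gamma (a + δ + k) * Real.Gamma (b + (m - k : ℕ)) +
        Real.Gamma (a + δ + (m - k : ℕ)) * Real.Gamma (b + k) -
        Real.Gamma (a + k) * Real.Gamma (b + δ + (m - k : ℕ)) -
        Real.Gamma (a + (m - k : ℕ)) * Real.Gamma (b + δ + k) < 0) ∧
    (2 * k = m →
      Real.Gamma (a + δ + k) * Real.Gamma (b + (m - k : ℕ)) -
        Real.Gamma (a + k) * Real.Gamma (b + δ + (m - k : ℕ)) < 0) := by
  have hkm : k ≤ m := by omega
  have hcast : ((m - k : ℕ) : ℝ) = (m : ℝ) - (k : ℝ) := by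
    push_cast [Nat.cast_sub hkm]; ring
  constructor
  · intro hlt
    have hv : (0:ℝ) ≤ (m : ℝ) - 2 * (k : ℝ) := by
      have h2 : ((2 * k : ℕ) : ℝ) ≤ ((m : ℕ) : ℝ) := Nat.cast_le.mpr hk
      push_cast at h2; linarith
    have hx : (0:ℝ) < a + k := by positivity
    have hxy : a + (k:ℝ) < b + k := by linarith
    have key := core δ ((m:ℝ) - 2 * k) (a + k) (b + k) hδ hv hx hxy
    rw [hcast]
    have e1 : a + (k:ℝ) + δ = a + δ + k := by ring
    have e2 : b + (k:ℝ) + ((m:ℝ) - 2*k) = b + ((m:ℝ) - k) := by ring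
    have e3 : a + (k:ℝ) + ((m:ℝ) - 2*k) + δ = a + δ + ((m:ℝ) - k) := by ring
    have e4 : b + (k:ℝ) + ((m:ℝ) - 2*k) + δ = b + δ + ((m:ℝ) - k) := by ring
    have e5 : a + (k:ℝ) + ((m:ℝ) - 2*k) = a + ((m:ℝ) - k) := by ring
    have e6 : b + (k:ℝ) + δ = b + δ + (k:ℝ) := by ring
    rw [e3, e4, e5, e2, e1, e6] at key
    linarith
  · intro heq
    have hmk : ((m - k : ℕ) : ℝ) = (k : ℝ) := by
      rw [hcast]
      have : (m : ℝ) = 2 * k := by exact_mod_cast heq.symm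
      linarith
    rw [hmk]
    have hx : (0:ℝ) < a + k := by positivity
    have hxy : a + (k:ℝ) < b + k := by linarith
    have key := core δ 0 (a + k) (b + k) hδ le_rfl hx hxy
    simp only [add_zero] at key
    have e1 : a + (k:ℝ) + δ = a + δ + k := by ring
    have e2 : b + (k:ℝ) + δ = b + δ + k := by ring
    rw [e1, e2] at key
    linarith
end

section
/- Let h(a,x) = Σ_{n≥0} h_n x^n/(a)_n where h_n > 0. Then for b > a > 0 and δ > 0, every power series coefficient (at x^m, m ≥ 1) of h(a+δ,x)h(b,x) − h(b+δ,x)h(a,x) is negative; consequently for x > 0, a ↦ h(a,x) is strictly log-convex. -/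
open Finset

/-- Pochhammer symbol (rising factorial) for real argument. -/
def poch (a : ℝ) (n : ℕ) : ℝ := ∏ i ∈ Finset.range n, (a + i)

lemma poch_zero (c : ℝ) : poch c 0 = 1 := by simp [poch]

lemma poch_succ (c : ℝ) (n : ℕ) : poch c (n+1) = poch c n * (c + n) := by
  simp [poch, Finset.prod_range_succ]

lemma poch_pos {c : ℝ} (hc : 0 < c) (n : ℕ) : 0 < poch c n :=
  Finset.prod_pos fun i _ => by
    have : (0:ℝ) ≤ i := Nat.cast_nonneg i
    linarith

lemma poch_add (c : ℝ) (k d : ℕ) : poch c (k + d) = poch c k * poch (c + k) d := by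
  unfold poch
  rw [Finset.prod_range_add]
  congr 1
  refine Finset.prod_congr rfl fun i _ => ?_
  push_cast; ring

lemma poch_mono {x y : ℝ} (hx : 0 < x) (hxy : x ≤ y) (n : ℕ) : poch x n ≤ poch y n := by
  refine Finset.prod_le_prod (fun i _ => ?_) (fun i _ => by linarith)
  have : (0:ℝ) ≤ i := Nat.cast_nonneg i
  linarith

lemma poch_cross {x y t : ℝ} (hx : 0 < x) (hxy : x ≤ y) (ht : 0 ≤ t) (n : ℕ) :
    poch x n * poch (y + t) n ≤ poch (x + t) n * poch y n := by
  unfold poch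
  rw [← Finset.prod_mul_distrib, ← Finset.prod_mul_distrib]
  refine Finset.prod_le_prod (fun i _ => ?_) (fun i _ => ?_) <;>
    · have hi : (0:ℝ) ≤ i := Nat.cast_nonneg i
      nlinarith [mul_nonneg ht (sub_nonneg.mpr hxy)]

lemma poch_cross_strict {x y t : ℝ} (hx : 0 < x) (hxy : x < y) (ht : 0 < t) {n : ℕ}
    (hn : 1 ≤ n) :
    poch x n * poch (y + t) n < poch (x + t) n * poch y n := by
  unfold poch
  rw [← Finset.prod_mul_distrib, ← Finset.prod_mul_distrib]
  refine Finset.prod_lt_prod_of_nonempty (fun i _ => ?_) (fun i _ => ?_)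
    (Finset.nonempty_range_iff.mpr (by omega))
  · have hi : (0:ℝ) ≤ i := Nat.cast_nonneg i
    have h1 : (0:ℝ) < x + i := by linarith
    have h2 : (0:ℝ) < y + t + i := by linarith
    exact mul_pos h1 h2
  · have hi : (0:ℝ) ≤ i := Nat.cast_nonneg i
    nlinarith [mul_pos ht (sub_pos.mpr hxy)]

lemma poch_diff_mono {x y t : ℝ} (hx : 0 < x) (hxy : x ≤ y) (ht : 0 ≤ t) (n : ℕ) :
    poch (x + t) n - poch x n ≤ poch (y + t) n - poch y n := by
  induction n with
  | zero => simp [poch_zero]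
  | succ n ih =>
    have hy : 0 < y := lt_of_lt_of_le hx hxy
    have hP := poch_pos hx n
    have hP'P := poch_mono hx (by linarith : x ≤ x + t) n
    have hQ'Q := poch_mono hy (by linarith : y ≤ y + t) n
    have hP'Q' : poch (x+t) n ≤ poch (y+t) n := poch_mono (by linarith) (by linarith) n
    have hn : (0:ℝ) ≤ n := Nat.cast_nonneg n
    rw [poch_succ, poch_succ, poch_succ, poch_succ]
    have h1 : (poch (x+t) n - poch x n) * (x + n) ≤ (poch (y+t) n - poch y n) * (y + n) :=
      mul_le_mul ih (show x + (n:ℝ) ≤ y + n by linarith) (by linarith) (by linarith)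
    have h2 : poch (x+t) n * t ≤ poch (y+t) n * t :=
      mul_le_mul_of_nonneg_right hP'Q' ht
    nlinarith [h1, h2]

lemma alg8 (pa pa2 pad pad2 pb pb2 pbd pbd2 : ℝ)
    (h1 : 0 < pa) (h2 : 0 < pa2) (h3 : 0 < pad) (h4 : 0 < pad2)
    (h5 : 0 < pb) (h6 : 0 < pb2) (h7 : 0 < pbd) (h8 : 0 < pbd2)
    (key1 : pa * pa2 * (pbd * pbd2) ≤ pad * pad2 * (pb * pb2))
    (key2 : pad2 + pb2 ≤ pa2 + pbd2) :
    1/(pad * (pb * pb2)) + 1/(pad * pad2 * pb) ≤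
      1/(pbd * (pa * pa2)) + 1/(pbd * pbd2 * pa) := by
  have hM : (0:ℝ) < pa * pa2 * pad * pad2 * pb * pb2 * pbd * pbd2 := by positivity
  have main : (pa * pa2 * (pbd * pbd2)) * (pad2 + pb2) ≤
      (pad * pad2 * (pb * pb2)) * (pa2 + pbd2) :=
    mul_le_mul key1 key2 (by positivity) (by positivity)
  have eL : 1/(pad * (pb * pb2)) + 1/(pad * pad2 * pb) =
      ((pa * pa2 * (pbd * pbd2)) * (pad2 + pb2)) /
        (pa * pa2 * pad * pad2 * pb * pb2 * pbd * pbd2) := by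
    field_simp
  have eR : 1/(pbd * (pa * pa2)) + 1/(pbd * pbd2 * pa) =
      ((pad * pad2 * (pb * pb2)) * (pa2 + pbd2)) /
        (pa * pa2 * pad * pad2 * pb * pb2 * pbd * pbd2) := by
    field_simp
    ring
  rw [eL, eR]
  exact (div_le_div_iff_of_pos_right hM).mpr main

lemma alg4 (A A' B B' : ℝ) (h1 : 0 < A) (h2 : 0 < A') (h3 : 0 < B) (h4 : 0 < B')
    (key1 : A * B' < A' * B) (key2 : A' + B ≤ A + B') :
    1/B + 1/A' < 1/A + 1/B' := by
  have hM : (0:ℝ) < A * A' * B * B' := by positivity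
  have main : (A * B') * (A' + B) < (A' * B) * (A + B') :=
    mul_lt_mul key1 key2 (by positivity) (by positivity)
  have eL : 1/B + 1/A' = ((A * B') * (A' + B)) / (A * A' * B * B') := by
    field_simp
  have eR : 1/A + 1/B' = ((A' * B) * (A + B')) / (A * A' * B * B') := by
    field_simp; ring
  rw [eL, eR]
  exact (div_lt_div_iff_of_pos_right hM).mpr main

lemma key_pair_aux {a b δ : ℝ} (ha : 0 < a) (hab : a < b) (hδ : 0 < δ) {k j : ℕ}
    (hkj : k ≤ j) :
    1/(poch (a+δ) k * poch b j) + 1/(poch (a+δ) j * poch b k) ≤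
      1/(poch (b+δ) k * poch a j) + 1/(poch (b+δ) j * poch a k) := by
  obtain ⟨d, rfl⟩ := Nat.exists_eq_add_of_le hkj
  have hb : 0 < b := ha.trans hab
  have hk : (0:ℝ) ≤ k := Nat.cast_nonneg k
  have key1 := poch_cross ha hab.le hδ.le (k + d)
  rw [poch_add a k d, poch_add (a+δ) k d, poch_add b k d, poch_add (b+δ) k d] at key1 ⊢
  have key2 : poch (a+δ+k) d + poch (b+k) d ≤ poch (a+k) d + poch (b+δ+k) d := by
    have hd := poch_diff_mono (x := a + k) (y := b + k) (t := δ)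
      (by linarith) (by linarith) hδ.le d
    have e1 : a + (k:ℝ) + δ = a + δ + k := by ring
    have e2 : b + (k:ℝ) + δ = b + δ + k := by ring
    rw [e1, e2] at hd
    linarith
  exact alg8 _ _ _ _ _ _ _ _
    (poch_pos ha k) (poch_pos (by linarith) d)
    (poch_pos (by linarith) k) (poch_pos (by linarith) d)
    (poch_pos hb k) (poch_pos (by linarith) d)
    (poch_pos (by linarith) k) (poch_pos (by linarith) d)
    key1 key2

lemma key_pair {a b δ : ℝ} (ha : 0 < a) (hab : a < b) (hδ : 0 < δ) (k j : ℕ) :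
    1/(poch (a+δ) k * poch b j) + 1/(poch (a+δ) j * poch b k) ≤
      1/(poch (b+δ) k * poch a j) + 1/(poch (b+δ) j * poch a k) := by
  rcases le_total k j with hkj | hkj
  · exact key_pair_aux ha hab hδ hkj
  · have := key_pair_aux ha hab hδ hkj
    linarith

lemma key_pair_strict {a b δ : ℝ} (ha : 0 < a) (hab : a < b) (hδ : 0 < δ) {m : ℕ}
    (hm : 1 ≤ m) :
    1/(poch (a+δ) 0 * poch b m) + 1/(poch (a+δ) m * poch b 0) <
      1/(poch (b+δ) 0 * poch a m) + 1/(poch (b+δ) m * poch a 0) := by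
  have hb : 0 < b := ha.trans hab
  rw [poch_zero, poch_zero, poch_zero, poch_zero, one_mul, mul_one, one_mul, mul_one]
  have key1 := poch_cross_strict ha hab hδ hm
  have key2 : poch (a+δ) m + poch b m ≤ poch a m + poch (b+δ) m := by
    have := poch_diff_mono (x := a) (y := b) (t := δ) ha hab.le hδ.le m
    linarith
  exact alg4 (poch a m) (poch (a+δ) m) (poch b m) (poch (b+δ) m)
    (poch_pos ha m) (poch_pos (by linarith) m) (poch_pos hb m) (poch_pos (by linarith) m)
    key1 key2

theorem stmt_16 (h : ℕ → ℝ) (hh : ∀ n, 0 < h n)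
    (a b δ : ℝ) (ha : 0 < a) (hab : a < b) (hδ : 0 < δ) :
    (∀ m : ℕ, 1 ≤ m →
      (∑ k ∈ Finset.range (m + 1),
        h k * h (m - k) *
          (1 / (poch (a + δ) k * poch b (m - k)) -
            1 / (poch (b + δ) k * poch a (m - k)))) < 0) ∧
    (∀ x : ℝ, 0 < x →
      (∀ c : ℝ, 0 < c → Summable (fun n : ℕ => h n * x ^ n / poch c n)) →
      (∑' n : ℕ, h n * x ^ n / poch (a + δ) n) * (∑' n : ℕ, h n * x ^ n / poch b n) <
        (∑' n : ℕ, h n * x ^ n / poch (b + δ) n) * (∑' n : ℕ, h n * x ^ n / poch a n)) := by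
  have hb : 0 < b := ha.trans hab
  have habδ : 0 < a + δ := by linarith
  have hbδ : 0 < b + δ := by linarith
  have part1 : ∀ m : ℕ, 1 ≤ m →
      (∑ k ∈ Finset.range (m + 1),
        h k * h (m - k) *
          (1 / (poch (a + δ) k * poch b (m - k)) -
            1 / (poch (b + δ) k * poch a (m - k)))) < 0 := by
    intro m hm
    set f : ℕ → ℝ := fun k => h k * h (m - k) *
      (1 / (poch (a + δ) k * poch b (m - k)) -
        1 / (poch (b + δ) k * poch a (m - k))) with hf
    have hpair : ∀ k ∈ Finset.range (m + 1), f k + f (m - k) ≤ (fun _ => (0:ℝ)) k := by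
      intro k hk
      have hkm : k ≤ m := Nat.lt_succ_iff.mp (Finset.mem_range.mp hk)
      have hss : m - (m - k) = k := Nat.sub_sub_self hkm
      have hkey := key_pair ha hab hδ k (m - k)
      have e : f k + f (m - k) = h k * h (m - k) *
          ((1 / (poch (a + δ) k * poch b (m - k)) + 1 / (poch (a + δ) (m - k) * poch b k)) -
           (1 / (poch (b + δ) k * poch a (m - k)) + 1 / (poch (b + δ) (m - k) * poch a k))) := by
        simp only [hf, hss]
        ring
      show f k + f (m - k) ≤ 0
      rw [e]
      exact mul_nonpos_of_nonneg_of_nonpos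
        (mul_nonneg (hh k).le (hh (m - k)).le) (by linarith)
    have hstrict : f 0 + f (m - 0) < (fun _ => (0:ℝ)) 0 := by
      have hkey := key_pair_strict ha hab hδ hm
      have e : f 0 + f (m - 0) = h 0 * h m *
          ((1 / (poch (a + δ) 0 * poch b m) + 1 / (poch (a + δ) m * poch b 0)) -
           (1 / (poch (b + δ) 0 * poch a m) + 1 / (poch (b + δ) m * poch a 0))) := by
        simp only [hf, Nat.sub_zero, Nat.sub_self]
        ring
      show f 0 + f (m - 0) < 0
      rw [e]
      exact mul_neg_of_pos_of_neg (mul_pos (hh 0) (hh m)) (by linarith)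
    have hsum2 : ∑ k ∈ Finset.range (m + 1), (f k + f (m - k)) < 0 := by
      have := Finset.sum_lt_sum hpair
        ⟨0, Finset.mem_range.mpr (Nat.succ_pos m), hstrict⟩
      simpa using this
    have hrefl : ∑ k ∈ Finset.range (m + 1), f (m - k) =
        ∑ k ∈ Finset.range (m + 1), f k := by
      have := Finset.sum_range_reflect f (m + 1)
      simpa using this
    rw [Finset.sum_add_distrib, hrefl] at hsum2
    linarith
  refine ⟨part1, ?_⟩
  intro x hx hsumm
  have hnorm : ∀ c : ℝ, 0 < c → Summable (fun n : ℕ => ‖h n * x ^ n / poch c n‖) := by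
    intro c hc
    have h1 : Summable (fun n : ℕ => |h n * x ^ n / poch c n|) :=
      summable_abs_iff.mpr (hsumm c hc)
    simpa only [Real.norm_eq_abs] using h1
  rw [tsum_mul_tsum_eq_tsum_sum_range_of_summable_norm (hnorm _ habδ) (hnorm _ hb),
      tsum_mul_tsum_eq_tsum_sum_range_of_summable_norm (hnorm _ hbδ) (hnorm _ ha)]
  have hterm : ∀ (c c' : ℝ) (n : ℕ),
      (∑ k ∈ Finset.range (n + 1),
        (h k * x ^ k / poch c k) * (h (n - k) * x ^ (n - k) / poch c' (n - k))) =
      x ^ n * ∑ k ∈ Finset.range (n + 1),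
        h k * h (n - k) * (1 / (poch c k * poch c' (n - k))) := by
    intro c c' n
    rw [Finset.mul_sum]
    refine Finset.sum_congr rfl fun k hk => ?_
    have hkn : k ≤ n := Nat.lt_succ_iff.mp (Finset.mem_range.mp hk)
    have hxk : x ^ k * x ^ (n - k) = x ^ n := by
      rw [← pow_add, Nat.add_sub_cancel' hkn]
    rw [← hxk]
    ring
  have hle : ∀ n : ℕ,
      (∑ k ∈ Finset.range (n + 1),
        (h k * x ^ k / poch (a + δ) k) * (h (n - k) * x ^ (n - k) / poch b (n - k))) ≤
      (∑ k ∈ Finset.range (n + 1),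
        (h k * x ^ k / poch (b + δ) k) * (h (n - k) * x ^ (n - k) / poch a (n - k))) := by
    intro n
    rw [hterm, hterm]
    rcases Nat.eq_zero_or_pos n with rfl | hn
    · simp [poch_zero]
    · have hS := part1 n hn
      have hdiff : (∑ k ∈ Finset.range (n + 1),
            h k * h (n - k) * (1 / (poch (a + δ) k * poch b (n - k)))) -
          (∑ k ∈ Finset.range (n + 1),
            h k * h (n - k) * (1 / (poch (b + δ) k * poch a (n - k)))) =
          ∑ k ∈ Finset.range (n + 1),
            h k * h (n - k) *
              (1 / (poch (a + δ) k * poch b (n - k)) -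
                1 / (poch (b + δ) k * poch a (n - k))) := by
        rw [← Finset.sum_sub_distrib]
        exact Finset.sum_congr rfl fun k _ => by ring
      have hxn : (0:ℝ) ≤ x ^ n := by positivity
      refine mul_le_mul_of_nonneg_left ?_ hxn
      rw [← sub_nonpos, hdiff]
      exact hS.le
  have hstrict1 :
      (∑ k ∈ Finset.range (1 + 1),
        (h k * x ^ k / poch (a + δ) k) * (h (1 - k) * x ^ (1 - k) / poch b (1 - k))) <
      (∑ k ∈ Finset.range (1 + 1),
        (h k * x ^ k / poch (b + δ) k) * (h (1 - k) * x ^ (1 - k) / poch a (1 - k))) := by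
    rw [hterm, hterm]
    have hS := part1 1 le_rfl
    have hdiff : (∑ k ∈ Finset.range (1 + 1),
          h k * h (1 - k) * (1 / (poch (a + δ) k * poch b (1 - k)))) -
        (∑ k ∈ Finset.range (1 + 1),
          h k * h (1 - k) * (1 / (poch (b + δ) k * poch a (1 - k)))) =
        ∑ k ∈ Finset.range (1 + 1),
          h k * h (1 - k) *
            (1 / (poch (a + δ) k * poch b (1 - k)) -
              1 / (poch (b + δ) k * poch a (1 - k))) := by
      rw [← Finset.sum_sub_distrib]
      exact Finset.sum_congr rfl fun k _ => by ring
    have hxn : (0:ℝ) < x ^ 1 := by positivity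
    refine mul_lt_mul_of_pos_left ?_ hxn
    rw [← sub_neg, hdiff]
    exact hS
  have hsum1 : Summable (fun n : ℕ => ∑ k ∈ Finset.range (n + 1),
      (h k * x ^ k / poch (a + δ) k) * (h (n - k) * x ^ (n - k) / poch b (n - k))) :=
    (summable_norm_sum_mul_range_of_summable_norm (hnorm _ habδ) (hnorm _ hb)).of_norm
  have hsum2 : Summable (fun n : ℕ => ∑ k ∈ Finset.range (n + 1),
      (h k * x ^ k / poch (b + δ) k) * (h (n - k) * x ^ (n - k) / poch a (n - k))) :=
    (summable_norm_sum_mul_range_of_summable_norm (hnorm _ hbδ) (hnorm _ ha)).of_norm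
  exact Summable.tsum_lt_tsum hle hstrict1 hsum1 hsum2
end
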